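/- Let $t \ge 2$ and let $G$ be a simple graph on $n$ vertices such that the minimum of $\Phi(G,\cdot)$ over $\Delta^{n-1}$ equals $0$. If $x \in \Delta^{n-1}$ is a minimizer of $\Phi(G,\cdot)$ with minimal support (no minimizer has support strictly contained in $\operatorname{Supp}(x)$), then $x_v = \frac{1}{|\operatorname{Supp}(x)|}$ for every $v \in \operatorname{Supp}(x)$. -/

import Mathlib

open Finset
open scoped Classical

/-- The order of the largest clique of `G` containing the vertex `v`. -/
noncomputable def cliqueAt {n : ℕ} (G : SimpleGraph (Fin n)) (v : Fin n) : ℕ :=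
  ((univ : Finset (Finset (Fin n))).filter
    (fun s : Finset (Fin n) => G.IsClique (s : Set (Fin n)) ∧ v ∈ s)).sup Finset.card

/-- The set of copies of `K_t` in `G`, as `t`-element vertex sets inducing cliques. -/
noncomputable def ktCliques {n : ℕ} (G : SimpleGraph (Fin n)) (t : ℕ) :
    Finset (Finset (Fin n)) :=
  (univ : Finset (Finset (Fin n))).filter
    (fun s : Finset (Fin n) => s.card = t ∧ G.IsClique (s : Set (Fin n)))

/-- `N(G, K_t)`, the number of copies of `K_t` in `G`. -/
noncomputable def numKt {n : ℕ} (G : SimpleGraph (Fin n)) (t : ℕ) : ℕ :=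
  (ktCliques G t).card

/-- The standard simplex `Δ^{n-1}`. -/
def simplex (n : ℕ) : Set (Fin n → ℝ) :=
  {x | (∀ i, 0 ≤ x i) ∧ ∑ i, x i = 1}

/-- `Φ(G, x) = A(G,x) - B(G,x)`. -/
noncomputable def PhiFn {n : ℕ} (G : SimpleGraph (Fin n)) (t : ℕ) (x : Fin n → ℝ) : ℝ :=
  (∑ v, x v * ((cliqueAt G v).choose t : ℝ) / (cliqueAt G v : ℝ) ^ t)
    - ∑ s ∈ ktCliques G t, ∏ v ∈ s, x v

/-- The support of `x`, as a finset. -/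
noncomputable def suppF {n : ℕ} (x : Fin n → ℝ) : Finset (Fin n) :=
  (univ : Finset (Fin n)).filter (fun v => 0 < x v)

/-- `x` is a minimizer of `Φ(G, ·)` over the simplex. -/
def IsMinimizer {n : ℕ} (G : SimpleGraph (Fin n)) (t : ℕ) (x : Fin n → ℝ) : Prop :=
  x ∈ simplex n ∧ ∀ y ∈ simplex n, PhiFn G t x ≤ PhiFn G t y

/-- `δ_{ij}(x)`. -/
noncomputable def deltaFn {n : ℕ} (G : SimpleGraph (Fin n)) (t : ℕ) (x : Fin n → ℝ)
    (i j : Fin n) : ℝ :=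
  (((cliqueAt G i).choose t : ℝ) / (cliqueAt G i : ℝ) ^ t
      - ((cliqueAt G j).choose t : ℝ) / (cliqueAt G j : ℝ) ^ t)
    - ((∑ s ∈ (ktCliques G (t - 1)).filter (fun s => ∀ v ∈ s, G.Adj i v), ∏ v ∈ s, x v)
      - (∑ s ∈ (ktCliques G (t - 1)).filter (fun s => ∀ v ∈ s, G.Adj j v), ∏ v ∈ s, x v))

/-- `G` is a regular complete multipartite graph: the vertices can be colored so that
adjacency is exactly "different colors" and all color classes have the same size. -/
def IsRegularCompleteMultipartite {n : ℕ} (G : SimpleGraph (Fin n)) : Prop :=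
  ∃ (r : ℕ) (f : Fin n → Fin r),
    (∀ u v, G.Adj u v ↔ f u ≠ f v) ∧
    (∀ a b : Fin r,
      ((univ : Finset (Fin n)).filter (fun v => f v = a)).card =
        ((univ : Finset (Fin n)).filter (fun v => f v = b)).card)


noncomputable def esum {n : ℕ} (r : ℕ) (S : Finset (Fin n)) (x : Fin n → ℝ) : ℝ :=
  ∑ T ∈ S.powersetCard r, ∏ v ∈ T, x v

lemma esum_congr {n : ℕ} (r : ℕ) {S : Finset (Fin n)} {x y : Fin n → ℝ}
    (h : ∀ v ∈ S, x v = y v) : esum r S x = esum r S y := by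
  refine Finset.sum_congr rfl fun T hT => ?_
  rw [Finset.mem_powersetCard] at hT
  exact Finset.prod_congr rfl fun v hv => h v (hT.1 hv)

lemma esum_insert {n : ℕ} (r : ℕ) {S : Finset (Fin n)} {i : Fin n} (hi : i ∉ S)
    (x : Fin n → ℝ) :
    esum (r + 1) (insert i S) x = esum (r + 1) S x + x i * esum r S x := by
  unfold esum
  rw [Finset.powersetCard_succ_insert hi, Finset.sum_union, Finset.sum_image, Finset.mul_sum]
  · congr 1
    refine Finset.sum_congr rfl fun T hT => ?_
    rw [Finset.mem_powersetCard] at hT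
    rw [Finset.prod_insert (fun h => hi (hT.1 h))]
  · intro T hT U hU hTU
    rw [Finset.mem_coe, Finset.mem_powersetCard] at hT hU
    have h1 : (insert i T).erase i = T := Finset.erase_insert (fun h => hi (hT.1 h))
    have h2 : (insert i U).erase i = U := Finset.erase_insert (fun h => hi (hU.1 h))
    rw [← h1, ← h2, hTU]
  · rw [Finset.disjoint_left]
    intro T hT hT'
    rw [Finset.mem_powersetCard] at hT
    obtain ⟨U, hU, rfl⟩ := Finset.mem_image.mp hT'
    exact hi (hT.1 (Finset.mem_insert_self i U))

lemma esum_pos {n : ℕ} {r : ℕ} {S : Finset (Fin n)} {x : Fin n → ℝ}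
    (hx : ∀ v ∈ S, 0 < x v) (hr : r ≤ S.card) : 0 < esum r S x :=
  Finset.sum_pos
    (fun T hT => Finset.prod_pos fun v hv => hx v ((Finset.mem_powersetCard.mp hT).1 hv))
    (Finset.powersetCard_nonempty.mpr hr)

lemma esum_uniform {n : ℕ} (r : ℕ) {S : Finset (Fin n)} {x : Fin n → ℝ} {c : ℝ}
    (h : ∀ v ∈ S, x v = c) : esum r S x = (S.card.choose r : ℝ) * c ^ r := by
  unfold esum
  have key : ∀ T ∈ S.powersetCard r, ∏ v ∈ T, x v = c ^ r := by
    intro T hT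
    rw [Finset.mem_powersetCard] at hT
    rw [Finset.prod_congr rfl (fun v hv => h v (hT.1 hv)), Finset.prod_const, hT.2]
  rw [Finset.sum_congr rfl key, Finset.sum_const, Finset.card_powersetCard, nsmul_eq_mul]

lemma esum_pair {n : ℕ} (r : ℕ) {S : Finset (Fin n)} {i j : Fin n} (hi : i ∈ S) (hj : j ∈ S)
    (hij : i ≠ j) (x : Fin n → ℝ) :
    esum (r + 2) S x = esum (r + 2) ((S.erase i).erase j) x
      + (x i + x j) * esum (r + 1) ((S.erase i).erase j) x
      + x i * x j * esum r ((S.erase i).erase j) x := by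
  set R := (S.erase i).erase j with hR
  have hjR : j ∉ R := Finset.notMem_erase _ _
  have hiR : i ∉ insert j R := by
    simp only [Finset.mem_insert, hR, Finset.mem_erase]
    rintro (h | ⟨_, h, _⟩)
    · exact hij h
    · exact h rfl
  have hjSi : j ∈ S.erase i := Finset.mem_erase.mpr ⟨Ne.symm hij, hj⟩
  have hS : S = insert i (insert j R) := by
    rw [hR, Finset.insert_erase hjSi, Finset.insert_erase hi]
  have e2 : r + 2 = (r + 1) + 1 := rfl
  rw [hS, e2, esum_insert (r + 1) hiR, esum_insert (r + 1) hjR, esum_insert r hjR]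
  ring

lemma sum_pair {n : ℕ} {S : Finset (Fin n)} {i j : Fin n} (hi : i ∈ S) (hj : j ∈ S)
    (hij : i ≠ j) (x : Fin n → ℝ) :
    ∑ v ∈ S, x v = x i + x j + ∑ v ∈ (S.erase i).erase j, x v := by
  set R := (S.erase i).erase j with hR
  have hjR : j ∉ R := Finset.notMem_erase _ _
  have hiR : i ∉ insert j R := by
    simp only [Finset.mem_insert, hR, Finset.mem_erase]
    rintro (h | ⟨_, h, _⟩)
    · exact hij h
    · exact h rfl
  have hjSi : j ∈ S.erase i := Finset.mem_erase.mpr ⟨Ne.symm hij, hj⟩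
  have hS : S = insert i (insert j R) := by
    rw [hR, Finset.insert_erase hjSi, Finset.insert_erase hi]
  rw [hS, Finset.sum_insert hiR, Finset.sum_insert hjR]
  ring
lemma choose_div_mono {t k m : ℕ} (ht0 : 0 < t) (hk : t ≤ k) (hkm : k ≤ m) :
    (k.choose t : ℝ) / (k : ℝ) ^ t ≤ (m.choose t : ℝ) / (m : ℝ) ^ t := by
  have hk0 : 0 < k := lt_of_lt_of_le ht0 hk
  have hm0 : 0 < m := lt_of_lt_of_le hk0 hkm
  have hkR : (0:ℝ) < (k:ℝ) := by exact_mod_cast hk0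
  have hmR : (0:ℝ) < (m:ℝ) := by exact_mod_cast hm0
  rw [div_le_div_iff₀ (by positivity) (by positivity)]
  have hnat : k.choose t * m ^ t ≤ m.choose t * k ^ t := by
    have hfac : 0 < t.factorial := Nat.factorial_pos t
    have hd : k.descFactorial t * m ^ t ≤ m.descFactorial t * k ^ t := by
      rw [Nat.descFactorial_eq_prod_range, Nat.descFactorial_eq_prod_range]
      calc (∏ i ∈ Finset.range t, (k - i)) * m ^ t
          = ∏ i ∈ Finset.range t, ((k - i) * m) := by
            rw [Finset.prod_mul_distrib, Finset.prod_const, Finset.card_range]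
        _ ≤ ∏ i ∈ Finset.range t, ((m - i) * k) := by
            refine Finset.prod_le_prod' fun i hi => ?_
            have hik : i ≤ k := le_trans (le_of_lt (Finset.mem_range.mp hi)) hk
            have h1 : i * k ≤ i * m := Nat.mul_le_mul_left i hkm
            have h2 : k * m = m * k := Nat.mul_comm k m
            rw [Nat.sub_mul, Nat.sub_mul]
            omega
        _ = (∏ i ∈ Finset.range t, (m - i)) * k ^ t := by
            rw [Finset.prod_mul_distrib, Finset.prod_const, Finset.card_range]
    rw [Nat.descFactorial_eq_factorial_mul_choose, Nat.descFactorial_eq_factorial_mul_choose,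
      mul_assoc, mul_assoc] at hd
    exact Nat.le_of_mul_le_mul_left hd hfac
  exact_mod_cast hnat

lemma macl {n : ℕ} (t : ℕ) (ht : 2 ≤ t) :
    ∀ (d : ℕ) (S : Finset (Fin n)) (x : Fin n → ℝ),
      (S.filter (fun v => x v ≠ 1 / (S.card : ℝ))).card ≤ d →
      (∀ v ∈ S, 0 < x v) → (∑ v ∈ S, x v = 1) → t ≤ S.card →
      ((S.card.choose t : ℝ) / (S.card : ℝ) ^ t ≤ esum t S x) →
      ∀ v ∈ S, x v = 1 / (S.card : ℝ) := by
  intro d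
  induction d with
  | zero =>
      intro S x hd _ _ _ _ v hv
      by_contra hne
      have hmem : v ∈ S.filter (fun v => x v ≠ 1 / (S.card : ℝ)) :=
        Finset.mem_filter.mpr ⟨hv, hne⟩
      have := Finset.card_pos.mpr ⟨v, hmem⟩
      omega
  | succ d ih =>
      intro S x hd hpos hsum htk hbig
      by_cases hle : (S.filter (fun v => x v ≠ 1 / (S.card : ℝ))).card ≤ d
      · exact ih S x hle hpos hsum htk hbig
      push_neg at hle
      have hk0 : 0 < S.card := lt_of_lt_of_le (by omega) htk
      have hkR : (0:ℝ) < (S.card : ℝ) := by exact_mod_cast hk0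
      set u : ℝ := 1 / (S.card : ℝ) with hu_def
      have hu : 0 < u := by positivity
      have hsum_u : ∑ _v ∈ S, u = 1 := by
        rw [Finset.sum_const, nsmul_eq_mul, hu_def]
        field_simp
      obtain ⟨w, hw⟩ : (S.filter (fun v => x v ≠ u)).Nonempty :=
        Finset.card_pos.mp (by omega)
      have hwS : w ∈ S := (Finset.mem_filter.mp hw).1
      have hwne : x w ≠ u := (Finset.mem_filter.mp hw).2
      have hex_i : ∃ i ∈ S, u < x i := by
        by_contra hall
        push_neg at hall
        have hlt : ∑ v ∈ S, x v < ∑ _v ∈ S, u :=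
          Finset.sum_lt_sum hall ⟨w, hwS, lt_of_le_of_ne (hall w hwS) hwne⟩
        rw [hsum, hsum_u] at hlt
        exact lt_irrefl _ hlt
      have hex_j : ∃ j ∈ S, x j < u := by
        by_contra hall
        push_neg at hall
        have hlt : ∑ _v ∈ S, u < ∑ v ∈ S, x v :=
          Finset.sum_lt_sum hall ⟨w, hwS, lt_of_le_of_ne (hall w hwS) (Ne.symm hwne)⟩
        rw [hsum, hsum_u] at hlt
        exact lt_irrefl _ hlt
      obtain ⟨i, hiS, hiu⟩ := hex_i
      obtain ⟨j, hjS, hju⟩ := hex_j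
      have hij : i ≠ j := by
        intro h
        rw [h] at hiu
        linarith
      set R := (S.erase i).erase j with hRdef
      have hRsub : R ⊆ S := fun v hv =>
        Finset.mem_of_mem_erase (Finset.mem_of_mem_erase hv)
      have hjSi : j ∈ S.erase i := Finset.mem_erase.mpr ⟨Ne.symm hij, hjS⟩
      have hRcard : R.card = S.card - 2 := by
        rw [hRdef, Finset.card_erase_of_mem hjSi, Finset.card_erase_of_mem hiS]
        omega
      set ε : ℝ := min (x i - u) (u - x j) with hεdef
      have hε : 0 < ε := lt_min (by linarith) (by linarith)
      have hε1 : ε ≤ x i - u := min_le_left _ _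
      have hε2 : ε ≤ u - x j := min_le_right _ _
      have hεlt : ε < x i - x j := lt_of_le_of_lt hε1 (by linarith)
      set y : Fin n → ℝ := fun v => if v = i then x i - ε else if v = j then x j + ε else x v
        with hydef
      have hyi : y i = x i - ε := by simp [hydef]
      have hyj : y j = x j + ε := by simp [hydef, hij, Ne.symm hij]
      have hyR : ∀ v ∈ R, y v = x v := by
        intro v hv
        obtain ⟨hvj, hv'⟩ := Finset.mem_erase.mp hv
        obtain ⟨hvi, _⟩ := Finset.mem_erase.mp hv'
        simp [hydef, hvi, hvj]
      have hyRs : ∀ v ∈ R, x v = y v := fun v hv => (hyR v hv).symm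
      have hypos : ∀ v ∈ S, 0 < y v := by
        intro v hv
        by_cases h1 : v = i
        · rw [h1, hyi]; linarith
        by_cases h2 : v = j
        · rw [h2, hyj]; linarith [hpos j hjS]
        · have : y v = x v := by simp [hydef, h1, h2]
          rw [this]; exact hpos v hv
      have hysum : ∑ v ∈ S, y v = 1 := by
        rw [sum_pair hiS hjS hij y, hyi, hyj, Finset.sum_congr rfl hyR]
        have h := sum_pair hiS hjS hij x
        linarith [hsum, h]
      obtain ⟨r, hr⟩ : ∃ r, t = r + 2 := ⟨t - 2, by omega⟩
      have hrR : r ≤ R.card := by omega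
      have hER : 0 < esum r R x := esum_pos (fun v hv => hpos v (hRsub hv)) hrR
      have hexp_x := esum_pair r hiS hjS hij x
      have hexp_y := esum_pair r hiS hjS hij y
      rw [← esum_congr (r+2) hyRs, ← esum_congr (r+1) hyRs, ← esum_congr r hyRs,
        hyi, hyj] at hexp_y
      simp only [← hRdef] at hexp_x hexp_y
      have hprod : (x i - ε) * (x j + ε) - x i * x j = ε * (x i - x j - ε) := by ring
      have hgt : esum t S x < esum t S y := by
        rw [hr, hexp_x, hexp_y]
        have h1 : 0 < ε * (x i - x j - ε) := mul_pos hε (by linarith)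
        nlinarith [hER, h1]
      -- apply IH to y
      have hfilt_sub : S.filter (fun v => y v ≠ u) ⊆ S.filter (fun v => x v ≠ u) := by
        intro v hv
        obtain ⟨hvS, hvne⟩ := Finset.mem_filter.mp hv
        refine Finset.mem_filter.mpr ⟨hvS, ?_⟩
        by_cases h1 : v = i
        · rw [h1]; exact ne_of_gt hiu
        by_cases h2 : v = j
        · rw [h2]; exact ne_of_lt hju
        · intro h; apply hvne; rw [hydef]; simp [h1, h2]; exact h
      have hstrict : ∃ v, v ∈ S.filter (fun v => x v ≠ u) ∧ v ∉ S.filter (fun v => y v ≠ u) := by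
        rcases min_choice (x i - u) (u - x j) with hmin | hmin
        · refine ⟨i, Finset.mem_filter.mpr ⟨hiS, ne_of_gt hiu⟩, ?_⟩
          intro hmem
          have := (Finset.mem_filter.mp hmem).2
          apply this
          rw [hyi, hεdef, hmin]; ring
        · refine ⟨j, Finset.mem_filter.mpr ⟨hjS, ne_of_lt hju⟩, ?_⟩
          intro hmem
          have := (Finset.mem_filter.mp hmem).2
          apply this
          rw [hyj, hεdef, hmin]; ring
      have hcard_lt : (S.filter (fun v => y v ≠ u)).card < (S.filter (fun v => x v ≠ u)).card := by
        obtain ⟨v, hv1, hv2⟩ := hstrict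
        exact Finset.card_lt_card (Finset.ssubset_iff_of_subset hfilt_sub |>.mpr ⟨v, hv1, hv2⟩)
      have hyIH := ih S y (by rw [← hu_def]; omega) hypos hysum htk (le_trans hbig (le_of_lt hgt))
      have hyuni : esum t S y = (S.card.choose t : ℝ) * u ^ t := esum_uniform t hyIH
      have hupow : u ^ t = 1 / (S.card : ℝ) ^ t := by
        rw [hu_def, div_pow, one_pow]
      exfalso
      have : (S.card.choose t : ℝ) / (S.card : ℝ) ^ t = esum t S y := by
        rw [hyuni, hupow]; ring
      linarith [hbig, hgt]
noncomputable def aW {n : ℕ} (G : SimpleGraph (Fin n)) (t : ℕ) (v : Fin n) : ℝ :=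
  ((cliqueAt G v).choose t : ℝ) / (cliqueAt G v : ℝ) ^ t

lemma phi_eq {n : ℕ} (G : SimpleGraph (Fin n)) (t : ℕ) (x : Fin n → ℝ) :
    PhiFn G t x = (∑ v, x v * aW G t v) - ∑ s ∈ ktCliques G t, ∏ v ∈ s, x v := by
  unfold PhiFn aW
  congr 1
  exact Finset.sum_congr rfl fun v _ => mul_div_assoc _ _ _

lemma cliqueAt_ge {n : ℕ} {G : SimpleGraph (Fin n)} {S : Finset (Fin n)}
    (hS : G.IsClique (S : Set (Fin n))) {v : Fin n} (hv : v ∈ S) :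
    S.card ≤ cliqueAt G v :=
  Finset.le_sup (Finset.mem_filter.mpr ⟨Finset.mem_univ _, hS, hv⟩)

noncomputable def yln {n : ℕ} (x : Fin n → ℝ) (i j : Fin n) (ε : ℝ) : Fin n → ℝ :=
  fun v => if v = i then x i + ε else if v = j then x j - ε else x v

noncomputable def Pq {n : ℕ} (G : SimpleGraph (Fin n)) (t : ℕ) (x : Fin n → ℝ)
    (i : Fin n) : ℝ :=
  ∑ s ∈ (ktCliques G t).filter (fun s => i ∈ s), ∏ v ∈ s.erase i, x v

noncomputable def Cq {n : ℕ} (G : SimpleGraph (Fin n)) (t : ℕ) (x : Fin n → ℝ)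
    (i j : Fin n) : ℝ :=
  ∑ s ∈ (ktCliques G t).filter (fun s => i ∈ s ∧ j ∈ s), ∏ v ∈ (s.erase i).erase j, x v

lemma sum_yln {n : ℕ} {x : Fin n → ℝ} {i j : Fin n} (hij : i ≠ j) (w : Fin n → ℝ) (ε : ℝ) :
    ∑ v, yln x i j ε v * w v = (∑ v, x v * w v) + ε * w i - ε * w j := by
  have key : ∀ v, yln x i j ε v * w v
      = x v * w v + ((if v = i then ε * w i else 0) + (if v = j then -(ε * w j) else 0)) := by
    intro v
    unfold yln
    by_cases h1 : v = i
    · subst h1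
      rw [if_pos rfl, if_pos rfl, if_neg hij]
      ring
    · rw [if_neg h1, if_neg h1]
      by_cases h2 : v = j
      · subst h2
        rw [if_pos rfl, if_pos rfl]
        ring
      · rw [if_neg h2, if_neg h2]
        ring
  rw [Finset.sum_congr rfl (fun v _ => key v), Finset.sum_add_distrib, Finset.sum_add_distrib]
  rw [Finset.sum_ite_eq' Finset.univ i (fun _ => ε * w i),
    Finset.sum_ite_eq' Finset.univ j (fun _ => -(ε * w j))]
  simp only [Finset.mem_univ, if_pos]
  ring

lemma prod_yln {n : ℕ} {x : Fin n → ℝ} {i j : Fin n} (hij : i ≠ j) (ε : ℝ)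
    (s : Finset (Fin n)) :
    ∏ v ∈ s, yln x i j ε v = (∏ v ∈ s, x v)
      + ε * ((if i ∈ s then ∏ v ∈ s.erase i, x v else 0)
             - (if j ∈ s then ∏ v ∈ s.erase j, x v else 0))
      - ε ^ 2 * (if i ∈ s ∧ j ∈ s then ∏ v ∈ (s.erase i).erase j, x v else 0) := by
  have hyi : yln x i j ε i = x i + ε := by simp [yln]
  have hyj : yln x i j ε j = x j - ε := by simp [yln, hij, Ne.symm hij]
  have hyo : ∀ v, v ≠ i → v ≠ j → yln x i j ε v = x v := by
    intro v h1 h2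
    simp [yln, h1, h2]
  by_cases hi : i ∈ s <;> by_cases hj : j ∈ s
  · -- both
    rw [if_pos hi, if_pos hj, if_pos ⟨hi, hj⟩]
    have hji : j ∈ s.erase i := Finset.mem_erase.mpr ⟨Ne.symm hij, hj⟩
    have hij' : i ∈ s.erase j := Finset.mem_erase.mpr ⟨hij, hi⟩
    have hP : ∏ v ∈ (s.erase i).erase j, yln x i j ε v = ∏ v ∈ (s.erase i).erase j, x v := by
      refine Finset.prod_congr rfl fun v hv => ?_
      obtain ⟨hvj, hv'⟩ := Finset.mem_erase.mp hv
      obtain ⟨hvi, _⟩ := Finset.mem_erase.mp hv'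
      exact hyo v hvi hvj
    rw [← Finset.mul_prod_erase s (yln x i j ε) hi,
      ← Finset.mul_prod_erase (s.erase i) (yln x i j ε) hji, hP, hyi, hyj]
    rw [← Finset.mul_prod_erase s x hi, ← Finset.mul_prod_erase (s.erase i) x hji]
    rw [← Finset.mul_prod_erase (s.erase j) x hij', Finset.erase_right_comm (a := j) (b := i)]
    ring
  · -- i only
    rw [if_pos hi, if_neg hj, if_neg (fun h => hj h.2)]
    have hP : ∏ v ∈ s.erase i, yln x i j ε v = ∏ v ∈ s.erase i, x v := by
      refine Finset.prod_congr rfl fun v hv => ?_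
      obtain ⟨hvi, hvs⟩ := Finset.mem_erase.mp hv
      exact hyo v hvi (fun h => hj (h ▸ hvs))
    rw [← Finset.mul_prod_erase s (yln x i j ε) hi, hP, hyi,
      ← Finset.mul_prod_erase s x hi]
    ring
  · -- j only
    rw [if_neg hi, if_pos hj, if_neg (fun h => hi h.1)]
    have hP : ∏ v ∈ s.erase j, yln x i j ε v = ∏ v ∈ s.erase j, x v := by
      refine Finset.prod_congr rfl fun v hv => ?_
      obtain ⟨hvj, hvs⟩ := Finset.mem_erase.mp hv
      exact hyo v (fun h => hi (h ▸ hvs)) hvj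
    rw [← Finset.mul_prod_erase s (yln x i j ε) hj, hP, hyj,
      ← Finset.mul_prod_erase s x hj]
    ring
  · -- neither
    rw [if_neg hi, if_neg hj, if_neg (fun h => hi h.1)]
    have hP : ∏ v ∈ s, yln x i j ε v = ∏ v ∈ s, x v := by
      refine Finset.prod_congr rfl fun v hv => ?_
      exact hyo v (fun h => hi (h ▸ hv)) (fun h => hj (h ▸ hv))
    rw [hP]
    ring

lemma phi_line {n : ℕ} (G : SimpleGraph (Fin n)) (t : ℕ) {x : Fin n → ℝ} {i j : Fin n}
    (hij : i ≠ j) (ε : ℝ) :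
    PhiFn G t (yln x i j ε) = PhiFn G t x
      + ε * ((aW G t i - aW G t j) - (Pq G t x i - Pq G t x j))
      + ε ^ 2 * Cq G t x i j := by
  rw [phi_eq, phi_eq, sum_yln hij (aW G t) ε,
    Finset.sum_congr rfl (fun s _ => prod_yln hij ε s)]
  rw [Finset.sum_sub_distrib, Finset.sum_add_distrib, ← Finset.mul_sum, ← Finset.mul_sum,
    Finset.sum_sub_distrib]
  unfold Pq Cq
  rw [Finset.sum_filter, Finset.sum_filter, Finset.sum_filter]
  ring

lemma yln_mem {n : ℕ} {x : Fin n → ℝ} {i j : Fin n} (hij : i ≠ j) {ε : ℝ}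
    (hx : x ∈ simplex n) (h1 : -x i ≤ ε) (h2 : ε ≤ x j) : yln x i j ε ∈ simplex n := by
  constructor
  · intro v
    unfold yln
    by_cases hv1 : v = i
    · rw [if_pos hv1]
      linarith
    · rw [if_neg hv1]
      by_cases hv2 : v = j
      · rw [if_pos hv2]
        linarith
      · rw [if_neg hv2]
        exact hx.1 v
  · have h := sum_yln (x := x) hij (fun _ => (1:ℝ)) ε
    simp only [mul_one] at h
    rw [h, hx.2]
    ring

lemma pair_clique {n : ℕ} {G : SimpleGraph (Fin n)} {t : ℕ} {x : Fin n → ℝ}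
    (hx : IsMinimizer G t x)
    (hmin : ∀ y : Fin n → ℝ, IsMinimizer G t y → ¬ suppF y ⊂ suppF x)
    {i j : Fin n} (hi : i ∈ suppF x) (hj : j ∈ suppF x) (hij : i ≠ j) :
    ∃ s ∈ ktCliques G t, i ∈ s ∧ j ∈ s ∧ ∀ v ∈ s, v ∈ suppF x := by
  have hxi : 0 < x i := (Finset.mem_filter.mp hi).2
  have hxj : 0 < x j := (Finset.mem_filter.mp hj).2
  have hx0 : ∀ v, 0 ≤ x v := hx.1.1
  have hC : Cq G t x i j ≠ 0 := by
    intro hC0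
    -- two perturbations
    have e1 := hx.2 (yln x i j (x j)) (yln_mem hij hx.1 (by linarith) le_rfl)
    have e2 := hx.2 (yln x i j (-(x i))) (yln_mem hij hx.1 le_rfl (by linarith))
    rw [phi_line G t hij, hC0] at e1 e2
    set D := (aW G t i - aW G t j) - (Pq G t x i - Pq G t x j) with hD
    have f1 : 0 ≤ x j * D := by nlinarith [e1]
    have f2 : 0 ≤ -(x i) * D := by nlinarith [e2]
    have hD0 : D = 0 := by
      rcases lt_trichotomy D 0 with h | h | h
      · nlinarith [mul_pos hxj (neg_pos.mpr h)]
      · exact h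
      · nlinarith [mul_pos hxi h]
    -- y is a minimizer with smaller support
    set y := yln x i j (x j) with hy
    have hyPhi : PhiFn G t y = PhiFn G t x := by
      rw [hy, phi_line G t hij, ← hD, hD0, hC0]
      ring
    have hymin : IsMinimizer G t y := by
      refine ⟨yln_mem hij hx.1 (by linarith) le_rfl, fun z hz => ?_⟩
      rw [hyPhi]
      exact hx.2 z hz
    have hsupp : suppF y = (suppF x).erase j := by
      ext v
      simp only [suppF, Finset.mem_filter, Finset.mem_erase, Finset.mem_univ, true_and]
      rw [hy]
      unfold yln
      by_cases h1 : v = i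
      · subst h1
        rw [if_pos rfl]
        constructor
        · intro _; exact ⟨hij, hxi⟩
        · intro _; linarith
      · rw [if_neg h1]
        by_cases h2 : v = j
        · subst h2
          rw [if_pos rfl]
          simp
        · rw [if_neg h2]
          simp [h2]
    exact hmin y hymin (by rw [hsupp]; exact Finset.erase_ssubset hj)
  obtain ⟨s, hs, hsne⟩ := Finset.exists_ne_zero_of_sum_ne_zero hC
  obtain ⟨hsK, his, hjs⟩ := Finset.mem_filter.mp hs
  refine ⟨s, hsK, his, hjs, fun v hv => ?_⟩
  by_cases h1 : v = i
  · exact h1 ▸ hi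
  by_cases h2 : v = j
  · exact h2 ▸ hj
  · have hvR : v ∈ (s.erase i).erase j :=
      Finset.mem_erase.mpr ⟨h2, Finset.mem_erase.mpr ⟨h1, hv⟩⟩
    have := Finset.prod_ne_zero_iff.mp hsne v hvR
    exact Finset.mem_filter.mpr ⟨Finset.mem_univ _, lt_of_le_of_ne (hx0 v) (Ne.symm this)⟩

/-- If the minimum of `Φ(G, ·)` over the simplex is `0`, then a minimal-support minimizer
is uniform on its support. -/
theorem stmt8 {n : ℕ} (t : ℕ) (ht : 2 ≤ t) (G : SimpleGraph (Fin n))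
    (x : Fin n → ℝ) (hx : IsMinimizer G t x) (h0 : PhiFn G t x = 0)
    (hmin : ∀ y : Fin n → ℝ, IsMinimizer G t y → ¬ suppF y ⊂ suppF x) :
    ∀ v ∈ suppF x, x v = 1 / ((suppF x).card : ℝ) := by
  set S := suppF x with hSdef
  have hx0 : ∀ v, 0 ≤ x v := hx.1.1
  have hoff : ∀ w, w ∉ S → x w = 0 := by
    intro w hw
    have : ¬ 0 < x w := fun h => hw (Finset.mem_filter.mpr ⟨Finset.mem_univ _, h⟩)
    linarith [hx0 w, not_lt.mp this]
  have hposS : ∀ v ∈ S, 0 < x v := fun v hv => (Finset.mem_filter.mp hv).2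
  have hsum_S : ∑ w ∈ S, x w = 1 := by
    rw [Finset.sum_subset (Finset.subset_univ S) (fun w _ hw => hoff w hw)]
    exact hx.1.2
  by_cases hk1 : S.card ≤ 1
  · -- singleton support
    intro v hv
    have hk : S.card = 1 := le_antisymm hk1 (Finset.card_pos.mpr ⟨v, hv⟩)
    obtain ⟨w, hw⟩ := Finset.card_eq_one.mp hk
    have hvw : v = w := by
      have := hv
      rw [hw] at this
      exact Finset.mem_singleton.mp this
    have : ∑ u ∈ S, x u = x v := by
      rw [hw, hvw, Finset.sum_singleton]
    rw [hk]
    rw [this] at hsum_S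
    rw [hsum_S]
    norm_num
  · push_neg at hk1
    have hpair : ∀ i ∈ S, ∀ j ∈ S, i ≠ j →
        ∃ s ∈ ktCliques G t, i ∈ s ∧ j ∈ s ∧ ∀ w ∈ s, w ∈ S :=
      fun i hi j hj hij => pair_clique hx hmin hi hj hij
    have hSclique : G.IsClique (S : Set (Fin n)) := by
      intro a ha b hb hab
      obtain ⟨s, hs, hi, hj, _⟩ := hpair a (Finset.mem_coe.mp ha) b (Finset.mem_coe.mp hb) hab
      have hsc : G.IsClique (s : Set (Fin n)) := (Finset.mem_filter.mp hs).2.2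
      exact hsc (Finset.mem_coe.mpr hi) (Finset.mem_coe.mpr hj) hab
    have htk : t ≤ S.card := by
      obtain ⟨a, ha, b, hb, hab⟩ := Finset.one_lt_card.mp hk1
      obtain ⟨s, hs, _, _, hsub⟩ := hpair a ha b hb hab
      have hcard : s.card = t := (Finset.mem_filter.mp hs).2.1
      rw [← hcard]
      exact Finset.card_le_card (fun w hw => hsub w hw)
    have hB : ∑ s ∈ ktCliques G t, ∏ w ∈ s, x w = esum t S x := by
      unfold esum
      have hsub : S.powersetCard t ⊆ ktCliques G t := by
        intro T hT
        rw [Finset.mem_powersetCard] at hT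
        exact Finset.mem_filter.mpr ⟨Finset.mem_univ _, hT.2,
          hSclique.subset (fun w hw => Finset.mem_coe.mpr (hT.1 (Finset.mem_coe.mp hw)))⟩
      have hzero : ∀ s ∈ ktCliques G t, s ∉ S.powersetCard t → ∏ w ∈ s, x w = 0 := by
        intro s hs hns
        have hcard : s.card = t := (Finset.mem_filter.mp hs).2.1
        have hnsub : ¬ s ⊆ S := by
          intro hsub'
          exact hns (Finset.mem_powersetCard.mpr ⟨hsub', hcard⟩)
        obtain ⟨w, hw, hwS⟩ := Finset.not_subset.mp hnsub
        exact Finset.prod_eq_zero hw (hoff w hwS)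
      exact (Finset.sum_subset hsub hzero).symm
    have hA : ∑ w, x w * aW G t w = ∑ w ∈ S, x w * aW G t w :=
      (Finset.sum_subset (Finset.subset_univ S)
        (fun w _ hw => by rw [hoff w hw]; ring)).symm
    have hPhi0 := h0
    rw [phi_eq, hA, hB] at hPhi0
    have haW : ∀ w ∈ S, (S.card.choose t : ℝ) / (S.card : ℝ) ^ t ≤ aW G t w := by
      intro w hw
      exact choose_div_mono (by omega) htk (cliqueAt_ge hSclique hw)
    have hbig : (S.card.choose t : ℝ) / (S.card : ℝ) ^ t ≤ esum t S x := by
      have h1 : esum t S x = ∑ w ∈ S, x w * aW G t w := by linarith [hPhi0]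
      calc (S.card.choose t : ℝ) / (S.card : ℝ) ^ t
          = ((S.card.choose t : ℝ) / (S.card : ℝ) ^ t) * ∑ w ∈ S, x w := by
            rw [hsum_S, mul_one]
        _ = ∑ w ∈ S, ((S.card.choose t : ℝ) / (S.card : ℝ) ^ t) * x w := by
            rw [Finset.mul_sum]
        _ ≤ ∑ w ∈ S, x w * aW G t w := by
            refine Finset.sum_le_sum fun w hw => ?_
            rw [mul_comm]
            exact mul_le_mul_of_nonneg_left (haW w hw) (hx0 w)
        _ = esum t S x := h1.symm
    exact macl t ht _ S x le_rfl hposS hsum_S htk hbig
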